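/- Let K ≥ 2 be an integer, ε > 0, ρ > 0 and τ > 0. Then ∫₀^∞ ∫₀^∞ (1 − exp( −(ε·x·z + ε/ρ)/(x·τ) ))·e^{−x}·z^{K−2}·e^{−z}/(K−2)! dx dz = 1 − 2·√(ε/(ρτ))·K₁(2·√(ε/(ρτ))) / (1 + ε/τ)^{K−1}. -/

import Mathlib

/-- The modified Bessel function of the second kind, via its integral representation
`K_ν(x) = ∫₀^∞ exp(−x cosh t) cosh(ν t) dt`. -/
noncomputable def besselK (ν x : ℝ) : ℝ :=
  ∫ t in Set.Ioi (0 : ℝ), Real.exp (-x * Real.cosh t) * Real.cosh (ν * t)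

open MeasureTheory Set Real

lemma intA {c : ℝ} (hc : 0 ≤ c) :
    IntegrableOn (fun x : ℝ => Real.exp (-x - c / x)) (Ioi 0) := by
  refine Integrable.mono' (exp_neg_integrableOn_Ioi 0 one_pos) ?_ ?_
  · exact ((measurable_id.neg.sub (measurable_const.div measurable_id)).exp
      |>.aestronglyMeasurable).restrict
  · filter_upwards [ae_restrict_mem measurableSet_Ioi] with x hx
    rw [Real.norm_eq_abs, abs_of_pos (Real.exp_pos _)]
    simp only [neg_mul, one_mul]
    apply Real.exp_le_exp.2
    have : 0 ≤ c / x := div_nonneg hc (le_of_lt hx)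
    linarith

lemma key {c : ℝ} (hc : 0 < c) :
    ∫ x in Ioi (0:ℝ), Real.exp (-x - c / x)
      = 2 * Real.sqrt c * besselK 1 (2 * Real.sqrt c) := by
  set s := Real.sqrt c with hs
  have hs0 : 0 < s := Real.sqrt_pos.2 hc
  have hs2 : s ^ 2 = c := Real.sq_sqrt hc.le
  have himg : (fun t : ℝ => s * Real.exp t) '' univ = Ioi 0 := by
    ext x
    simp only [image_univ, mem_range, mem_Ioi]
    constructor
    · rintro ⟨t, rfl⟩; positivity
    · intro hx; exact ⟨Real.log (x / s), by
        rw [Real.exp_log (by positivity), mul_div_cancel₀ _ hs0.ne']⟩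
  have hderiv : ∀ t ∈ (univ : Set ℝ), HasDerivWithinAt (fun t : ℝ => s * Real.exp t)
      (s * Real.exp t) univ t :=
    fun t _ => ((Real.hasDerivAt_exp t).const_mul s).hasDerivWithinAt
  have hinj : InjOn (fun t : ℝ => s * Real.exp t) univ := by
    intro a _ b _ h
    exact Real.exp_injective (mul_left_cancel₀ hs0.ne' h)
  have hcomp : ∀ t : ℝ, |s * Real.exp t| • Real.exp (-(s * Real.exp t) - c / (s * Real.exp t))
      = s * (Real.exp t * Real.exp (-(2 * s) * Real.cosh t)) := by
    intro t
    have het : (0:ℝ) < Real.exp t := Real.exp_pos t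
    have h1 : c / (s * Real.exp t) = s * Real.exp (-t) := by
      rw [← hs2, Real.exp_neg]
      field_simp
    rw [h1, smul_eq_mul, abs_of_pos (by positivity), mul_assoc, ← Real.exp_add, ← Real.exp_add]
    congr 1
    rw [Real.cosh_eq]
    ring
  have step1 : ∫ x in Ioi (0:ℝ), Real.exp (-x - c / x)
      = ∫ t : ℝ, s * (Real.exp t * Real.exp (-(2 * s) * Real.cosh t)) := by
    rw [← himg, integral_image_eq_integral_abs_deriv_smul MeasurableSet.univ hderiv hinj,
      setIntegral_univ]
    exact integral_congr_ae (Filter.Eventually.of_forall hcomp)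
  have hInt : Integrable (fun t : ℝ => s * (Real.exp t * Real.exp (-(2 * s) * Real.cosh t))) := by
    have := (integrableOn_image_iff_integrableOn_abs_deriv_smul MeasurableSet.univ hderiv hinj
      (fun x => Real.exp (-x - c / x))).1 (by rw [himg]; exact intA hc.le)
    rw [integrableOn_univ] at this
    exact this.congr (Filter.Eventually.of_forall hcomp)
  have hInt' : Integrable (fun t : ℝ => Real.exp t * Real.exp (-(2 * s) * Real.cosh t)) := by
    have := hInt.const_mul (s⁻¹)
    simpa [mul_assoc, inv_mul_cancel₀ hs0.ne', ← mul_assoc] using this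
  rw [step1, integral_const_mul]
  have hsplit : ∫ t : ℝ, Real.exp t * Real.exp (-(2 * s) * Real.cosh t)
      = (∫ t in Iic (0:ℝ), Real.exp t * Real.exp (-(2 * s) * Real.cosh t))
        + ∫ t in Ioi (0:ℝ), Real.exp t * Real.exp (-(2 * s) * Real.cosh t) := by
    rw [← setIntegral_union (Iic_disjoint_Ioi le_rfl) measurableSet_Ioi
      hInt'.integrableOn hInt'.integrableOn, Iic_union_Ioi, Measure.restrict_univ]
  have hneg : ∫ t in Iic (0:ℝ), Real.exp t * Real.exp (-(2 * s) * Real.cosh t)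
      = ∫ t in Ioi (0:ℝ), Real.exp (-t) * Real.exp (-(2 * s) * Real.cosh t) := by
    rw [← neg_zero, ← integral_comp_neg_Iic]
    simp [Real.cosh_neg]
  have intneg : IntegrableOn (fun t : ℝ => Real.exp (-t) * Real.exp (-(2 * s) * Real.cosh t))
      (Ioi 0) := by
    refine Integrable.mono' hInt'.integrableOn ?_ ?_
    · exact (((measurable_id.neg.exp).mul
        ((measurable_const.mul measurable_cosh).exp)).aestronglyMeasurable).restrict
    · filter_upwards [ae_restrict_mem measurableSet_Ioi] with t ht
      rw [Real.norm_eq_abs, abs_of_pos (by positivity)]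
      have : Real.exp (-t) ≤ Real.exp t := Real.exp_le_exp.2 (by simp at ht ⊢; linarith)
      exact mul_le_mul_of_nonneg_right this (Real.exp_pos _).le
  rw [hsplit, hneg, ← integral_add intneg hInt'.integrableOn]
  have heq : ∀ t : ℝ, Real.exp (-t) * Real.exp (-(2 * s) * Real.cosh t)
      + Real.exp t * Real.exp (-(2 * s) * Real.cosh t)
      = 2 * (Real.exp (-(2 * s) * Real.cosh t) * Real.cosh (1 * t)) := by
    intro t
    rw [one_mul, Real.cosh_eq]
    ring
  rw [setIntegral_congr_fun measurableSet_Ioi (fun t _ => heq t), integral_const_mul, besselK]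
  ring

theorem stmt_14 (K : ℕ) (hK : 2 ≤ K) (ε ρ τ : ℝ) (hε : 0 < ε) (hρ : 0 < ρ) (hτ : 0 < τ) :
    ∫ z in Set.Ioi (0 : ℝ), ∫ x in Set.Ioi (0 : ℝ),
        (1 - Real.exp (-(ε * x * z + ε / ρ) / (x * τ))) * Real.exp (-x) *
          z ^ ((K : ℝ) - 2) * Real.exp (-z) / (K - 2).factorial =
      1 - 2 * Real.sqrt (ε / (ρ * τ)) * besselK 1 (2 * Real.sqrt (ε / (ρ * τ))) /
        (1 + ε / τ) ^ ((K : ℝ) - 1) := by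
  set c : ℝ := ε / (ρ * τ) with hcdef
  have hc : 0 < c := by positivity
  set I : ℝ := ∫ x in Ioi (0:ℝ), Real.exp (-x - c / x) with hIdef
  set a : ℝ := (K : ℝ) - 2 with hadef
  have ha : a = ((K - 2 : ℕ) : ℝ) := by
    rw [Nat.cast_sub hK]; norm_num [hadef]
  have ha0 : 0 ≤ a := by rw [ha]; positivity
  set N : ℝ := ((K - 2).factorial : ℝ) with hNdef
  have hN : 0 < N := by positivity
  set b : ℝ := 1 + ε / τ with hbdef
  have hb : 0 < b := by positivity
  -- inner integral
  have inner : ∀ z ∈ Ioi (0:ℝ),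
      (∫ x in Set.Ioi (0 : ℝ),
        (1 - Real.exp (-(ε * x * z + ε / ρ) / (x * τ))) * Real.exp (-x) *
          z ^ ((K : ℝ) - 2) * Real.exp (-z) / (K - 2).factorial)
      = z ^ a * Real.exp (-(1 * z)) * (1 / N)
          - (I / N) * (z ^ a * Real.exp (-(b * z))) := by
    intro z hz
    have hz0 : (0:ℝ) < z := hz
    have hcong : ∀ x ∈ Ioi (0:ℝ),
        (1 - Real.exp (-(ε * x * z + ε / ρ) / (x * τ))) * Real.exp (-x) *
          z ^ ((K : ℝ) - 2) * Real.exp (-z) / (K - 2).factorial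
        = (Real.exp (-x) - Real.exp (-((ε / τ) * z)) * Real.exp (-x - c / x))
            * (z ^ a * Real.exp (-z) / N) := by
      intro x hx
      have hx0 : (0:ℝ) < x := hx
      have harg : -(ε * x * z + ε / ρ) / (x * τ) = -((ε / τ) * z) + (-(c / x)) := by
        rw [hcdef]
        field_simp
        ring
      rw [harg, Real.exp_add, ← hadef, ← hNdef,
        show Real.exp (-x - c/x) = Real.exp (-(c/x)) * Real.exp (-x) by
          rw [← Real.exp_add]; ring_nf]
      ring
    rw [setIntegral_congr_fun measurableSet_Ioi hcong, integral_mul_const]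
    have hexp : IntegrableOn (fun x : ℝ => Real.exp (-x)) (Ioi 0) := by
      simpa using exp_neg_integrableOn_Ioi 0 one_pos
    rw [integral_sub hexp ((intA hc.le).const_mul _), integral_exp_neg_Ioi_zero,
      integral_const_mul, ← hIdef]
    have : Real.exp (-((ε/τ)*z)) * Real.exp (-z) = Real.exp (-(b*z)) := by
      rw [← Real.exp_add]; congr 1; rw [hbdef]; ring
    rw [show -z = -(1*z) by ring, ← this]
    ring
  rw [setIntegral_congr_fun measurableSet_Ioi inner]
  -- integrability for the outer split
  have houter : ∀ r : ℝ, 0 < r → IntegrableOn (fun z : ℝ => z ^ a * Real.exp (-(r * z))) (Ioi 0) := by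
    intro r hr
    have := integrableOn_rpow_mul_exp_neg_mul_rpow (p := 1) (s := a) (b := r)
      (by linarith) one_pos hr
    simpa [Real.rpow_one] using this
  have hG : ∀ r : ℝ, 0 < r →
      ∫ z in Ioi (0:ℝ), z ^ a * Real.exp (-(r * z)) = (1/r) ^ (a+1) * Real.Gamma (a+1) := by
    intro r hr
    rw [← integral_rpow_mul_exp_neg_mul_Ioi (by linarith : (0:ℝ) < a + 1) hr]
    norm_num
  have hGamma : Real.Gamma (a + 1) = N := by
    rw [ha, hNdef, Real.Gamma_nat_eq_factorial]
  rw [integral_sub (((houter 1 one_pos).mul_const _)) ((houter b hb).const_mul _),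
    integral_mul_const, integral_const_mul, hG 1 one_pos, hG b hb, hGamma, ← key hc, ← hIdef]
  have hb1 : (1/b) ^ (a+1) = (b ^ (a+1))⁻¹ := by
    rw [one_div, Real.inv_rpow hb.le]
  have hK1 : a + 1 = (K:ℝ) - 1 := by rw [hadef]; ring
  rw [hb1, hK1]
  have h1 : (1/1:ℝ) ^ ((K:ℝ)-1) = 1 := by norm_num
  rw [h1]
  field_simp
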